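/- Let M be a structure in a finite relational language L such that every atomic relation of M is mutually algebraic (M is finitely MA-presented), and suppose there is a uniform finite bound B on the size of every MA-connected component of M. Then M is cellular: taking K to be the union of all components whose isomorphism type (as an enumerated finite L-structure) occurs only finitely often, and grouping the remaining components by isomorphism type, yields a cellular partition of M. -/

import Mathlib

/-- A cellular partition of the structure `M` (with atomic relations `rel`): a finite set
`K` together with families of tuples `c i j` (`i ∈ [n]`, `j ∈ ℕ`, `c i j` of length
`k i`) partitioning `M`, such that for fixed `i` the tuples `c i j` are pairwise
isomorphic over `K`, and every permutation `σ` of `ℕ` is realized by an automorphism of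
`M` mapping each `c i j` coordinatewise onto `c i (σ j)` and fixing everything outside
the family pointwise. -/
def IsCellularPartition {M L : Type*} (arity : L → ℕ)
    (rel : (r : L) → Set (Fin (arity r) → M))
    (K : Set M) (n : ℕ) (k : Fin n → ℕ)
    (c : (i : Fin n) → ℕ → (Fin (k i) → M)) : Prop :=
  -- `K` is finite
  K.Finite ∧
  -- the pieces cover `M`
  (∀ x : M, x ∈ K ∨ ∃ i j ℓ, c i j ℓ = x) ∧
  -- and are pairwise disjoint
  (∀ i j ℓ, c i j ℓ ∉ K) ∧
  (∀ (i : Fin n) (j : ℕ) (ℓ : Fin (k i)) (i' : Fin n) (j' : ℕ) (ℓ' : Fin (k i')),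
      c i j ℓ = c i' j' ℓ' → i = i' ∧ j = j' ∧ (ℓ : ℕ) = (ℓ' : ℕ)) ∧
  -- for fixed `i`, the tuples `c i j` are pairwise isomorphic over `K`
  (∀ (i : Fin n) (j j' : ℕ), ∃ g : M → M,
     (∀ x ∈ K, g x = x) ∧ (∀ ℓ, g (c i j ℓ) = c i j' ℓ) ∧
     ∀ (r : L) (v : Fin (arity r) → M),
       (∀ p, v p ∈ K ∨ ∃ ℓ, v p = c i j ℓ) → (v ∈ rel r ↔ (g ∘ v) ∈ rel r)) ∧
  -- every permutation of each family is realized by an automorphism fixing the rest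
  (∀ (i : Fin n) (σ : Equiv.Perm ℕ), ∃ f : M → M, Function.Bijective f ∧
     (∀ (r : L) (v : Fin (arity r) → M), v ∈ rel r ↔ (f ∘ v) ∈ rel r) ∧
     (∀ j ℓ, f (c i j ℓ) = c i (σ j) ℓ) ∧
     (∀ x : M, (∀ j ℓ, x ≠ c i j ℓ) → f x = x))

/-- A relation `R ⊆ M^n` is mutually algebraic with constant `K` if every element of `M`
occurs as a coordinate of at most `K` tuples of `R`. -/
def MutAlg {M : Type*} {n : ℕ} (R : Set (Fin n → M)) (K : ℕ) : Prop :=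
  ∀ m : M, {b | b ∈ R ∧ ∃ i, b i = m}.Finite ∧ {b | b ∈ R ∧ ∃ i, b i = m}.ncard ≤ K

/-- `b` is a mate of `a` if some tuple containing both `a` and `b` satisfies some atomic
relation of the structure. -/
def Mate {M L : Type*} (arity : L → ℕ) (rel : (r : L) → Set (Fin (arity r) → M))
    (a b : M) : Prop :=
  ∃ r : L, ∃ d ∈ rel r, (∃ i, d i = a) ∧ (∃ j, d j = b)

/-- If `M` is a countable structure in a finite relational language all of whose atomic
relations are mutually algebraic (`M` is finitely MA-presented), and there is a uniform
finite bound `B` on the size of all MA-connected components (classes of the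
reflexive-transitive closure of the mate relation), then `M` is cellular. -/
theorem stmt_12 {M L : Type*} [Countable M] [Finite L]
    (arity : L → ℕ) (rel : (r : L) → Set (Fin (arity r) → M))
    (hMA : ∀ r : L, ∃ K : ℕ, MutAlg (rel r) K)
    (B : ℕ)
    (hB : ∀ a : M, {b | Relation.ReflTransGen (Mate arity rel) a b}.Finite ∧
      {b | Relation.ReflTransGen (Mate arity rel) a b}.ncard ≤ B) :
    ∃ (K : Set M) (n : ℕ) (k : Fin n → ℕ) (c : (i : Fin n) → ℕ → (Fin (k i) → M)),
      IsCellularPartition arity rel K n k c := by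
  
  classical
  have msymm : Symmetric (Relation.ReflTransGen (Mate arity rel)) :=
    by haveI : Std.Symm (Mate arity rel) := ⟨fun _ _ h => by
        obtain ⟨r, d, hd, hi, hj⟩ := h; exact ⟨r, d, hd, hj, hi⟩⟩
       exact fun _ _ h => Std.Symm.symm _ _ h
  set S : Setoid M := ⟨fun a b => Relation.ReflTransGen (Mate arity rel) a b,
    ⟨fun _ => Relation.ReflTransGen.refl, fun h => msymm h,
     fun h h' => Relation.ReflTransGen.trans h h'⟩⟩ with hS
  set cpt : Quotient S → Set M := fun q => {b | Quotient.mk S b = q} with hcpt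
  have cpt_self : ∀ x : M, x ∈ cpt (Quotient.mk S x) := fun _ => rfl
  have cpt_eq : ∀ a : M,
      cpt (Quotient.mk S a) = {b | Relation.ReflTransGen (Mate arity rel) a b} := by
    intro a
    ext b
    constructor
    · intro h
      exact msymm (Quotient.exact h)
    · intro h
      exact Quotient.sound (msymm h)
  have cpt_mate : ∀ (r : L) (v : Fin (arity r) → M), v ∈ rel r →
      ∀ p p₀ : Fin (arity r), Quotient.mk S (v p) = Quotient.mk S (v p₀) :=
    fun r v hv p p₀ =>
      Quotient.sound (Relation.ReflTransGen.single ⟨r, v, hv, ⟨p, rfl⟩, ⟨p₀, rfl⟩⟩)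
  have hEnum : ∀ q : Quotient S, ∃ m : ℕ, m ≤ B ∧ ∃ e : Fin m → M,
      Function.Injective e ∧ Set.range e = cpt q := by
    intro q
    obtain ⟨a⟩ := q
    obtain ⟨hf, hcard⟩ := hB a
    obtain ⟨m, e, hinj, hrange⟩ := Set.Finite.fin_param hf
    refine ⟨m, ?_, e, hinj, ?_⟩
    · have h1 : Nat.card (Set.range e) = m := by
        rw [Nat.card_range_of_injective hinj]; simp
      rw [hrange, Nat.card_coe_set_eq] at h1
      omega
    · show Set.range e = cpt (Quotient.mk S a)
      rw [cpt_eq a]; exact hrange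
  choose sz hszB e einj erange using hEnum
  have e_mem : ∀ q ℓ, e q ℓ ∈ cpt q := fun q ℓ => (erange q) ▸ ⟨ℓ, rfl⟩
  have e_surjOn : ∀ q, ∀ x ∈ cpt q, ∃ ℓ, e q ℓ = x := fun q x hx => by
    rw [← erange q] at hx; exact hx
  have e_class : ∀ q ℓ, Quotient.mk S (e q ℓ) = q := fun q ℓ => e_mem q ℓ
  have decomp : ∀ (r : L) (v : Fin (arity r) → M), v ∈ rel r →
      ∀ (q : Quotient S) (p₀ : Fin (arity r)), Quotient.mk S (v p₀) = q →
      ∃ w : Fin (arity r) → Fin (sz q), ∀ p, e q (w p) = v p := by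
    intro r v hv q p₀ hp
    have hall : ∀ p, v p ∈ cpt q := fun p => by
      show Quotient.mk S (v p) = q
      rw [← hp]; exact cpt_mate r v hv p p₀
    choose w hw using fun p => e_surjOn q _ (hall p)
    exact ⟨w, hw⟩
  set tp : Quotient S → (Fin (B + 1) × ((r : L) → Set (Fin (arity r) → Fin B))) := fun q =>
    (⟨sz q, Nat.lt_succ_of_le (hszB q)⟩,
     fun r => {w | ∃ w' : Fin (arity r) → Fin (sz q),
        (∀ p, ((w' p : ℕ) = (w p : ℕ))) ∧ (fun p => e q (w' p)) ∈ rel r}) with htp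
  have tp_sz : ∀ q q', tp q = tp q' → sz q = sz q' := by
    intro q q' h
    exact congrArg (fun t => (t.1 : ℕ)) h
  have transfer : ∀ q q', tp q = tp q' → ∀ (r : L)
      (w1 : Fin (arity r) → Fin (sz q)) (w2 : Fin (arity r) → Fin (sz q')),
      (∀ p, (w1 p : ℕ) = (w2 p : ℕ)) →
      (fun p => e q (w1 p)) ∈ rel r → (fun p => e q' (w2 p)) ∈ rel r := by
    intro q q' h r w1 w2 hw hv
    have hsets : (tp q).2 r = (tp q').2 r := by rw [h]
    have hmem : (fun p => (⟨(w1 p : ℕ), lt_of_lt_of_le (w1 p).isLt (hszB q)⟩ : Fin B))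
        ∈ (tp q).2 r := ⟨w1, fun _ => rfl, hv⟩
    rw [hsets] at hmem
    obtain ⟨w'', hw'', hv''⟩ := hmem
    have hww : w2 = w'' := by
      funext p
      exact Fin.ext ((hw p).symm.trans (hw'' p).symm)
    rw [hww]; exact hv''
  have hITfin : {t : Fin (B + 1) × ((r : L) → Set (Fin (arity r) → Fin B)) |
      {q | tp q = t}.Infinite}.Finite := Set.toFinite _
  set n := hITfin.toFinset.card with hn
  set ti : Fin n → Fin (B + 1) × ((r : L) → Set (Fin (arity r) → Fin B)) :=
    fun i => (hITfin.toFinset.equivFin.symm i : _) with hti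
  have ti_inj : Function.Injective ti := fun i i' h =>
    hITfin.toFinset.equivFin.symm.injective (Subtype.ext h)
  have ti_mem : ∀ i, {q | tp q = ti i}.Infinite := fun i => by
    have h := (hITfin.toFinset.equivFin.symm i).2
    rw [Set.Finite.mem_toFinset] at h
    exact h
  have ti_surj : ∀ t, {q | tp q = t}.Infinite → ∃ i, ti i = t := by
    intro t ht
    refine ⟨hITfin.toFinset.equivFin ⟨t, Set.Finite.mem_toFinset hITfin |>.mpr ht⟩, ?_⟩
    show ((hITfin.toFinset.equivFin.symm (hITfin.toFinset.equivFin _)) : _) = t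
    rw [Equiv.symm_apply_apply]
  have hFib : ∀ i : Fin n, ∃ en : ℕ → Quotient S, Function.Injective en ∧
      {q | tp q = ti i} = Set.range en := by
    intro i
    have hinf := ti_mem i
    haveI := hinf.to_subtype
    obtain ⟨d⟩ := nonempty_denumerable ↥{q | tp q = ti i}
    refine ⟨fun j => ((@Denumerable.eqv _ d).symm j : {q | tp q = ti i}), ?_, ?_⟩
    · exact fun a b hab => (@Denumerable.eqv _ d).symm.injective (Subtype.ext hab)
    · ext q
      constructor
      · intro hq
        exact ⟨(@Denumerable.eqv _ d) ⟨q, hq⟩, by simp⟩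
      · rintro ⟨j, rfl⟩
        exact ((@Denumerable.eqv _ d).symm j).2
  choose en en_inj en_range using hFib
  have tp_en : ∀ i j, tp (en i j) = ti i := fun i j => by
    have h : en i j ∈ {q | tp q = ti i} := (en_range i) ▸ ⟨j, rfl⟩
    exact h
  set k : Fin n → ℕ := fun i => ((ti i).1 : ℕ) with hk
  have sz_en : ∀ i j, sz (en i j) = k i := fun i j =>
    congrArg (fun t => (t.1 : ℕ)) (tp_en i j)
  set c : (i : Fin n) → ℕ → Fin (k i) → M :=
    fun i j ℓ => e (en i j) ⟨(ℓ : ℕ), lt_of_lt_of_eq ℓ.isLt (sz_en i j).symm⟩ with hc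
  set K : Set M := {x | {q | tp q = tp (Quotient.mk S x)}.Finite} with hK
  have c_class : ∀ i j ℓ, Quotient.mk S (c i j ℓ) = en i j := fun i j ℓ => e_class _ _
  have c_notK : ∀ (i : Fin n) (j : ℕ) (ℓ : Fin (k i)), c i j ℓ ∉ K := by
    intro i j ℓ hmem
    have h1 : {q | tp q = tp (Quotient.mk S (c i j ℓ))}.Finite := hmem
    rw [c_class i j ℓ, tp_en i j] at h1
    exact (ti_mem i) h1
  have c_inj : ∀ (i : Fin n) (j : ℕ) (ℓ : Fin (k i)) (i' : Fin n) (j' : ℕ) (ℓ' : Fin (k i')),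
      c i j ℓ = c i' j' ℓ' → i = i' ∧ j = j' ∧ (ℓ : ℕ) = (ℓ' : ℕ) := by
    intro i j ℓ i' j' ℓ' h
    have hq : en i j = en i' j' := by rw [← c_class i j ℓ, ← c_class i' j' ℓ', h]
    have hii : i = i' := ti_inj (by rw [← tp_en i j, ← tp_en i' j', hq])
    subst hii
    have hjj : j = j' := en_inj i hq
    subst hjj
    have h4 := congrArg Fin.val (einj (en i j) h)
    exact ⟨rfl, rfl, h4⟩
  have cover : ∀ x : M, x ∈ K ∨ ∃ i j ℓ, c i j ℓ = x := by
    intro x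
    by_cases hx : {q | tp q = tp (Quotient.mk S x)}.Finite
    · exact Or.inl hx
    · obtain ⟨i, hi⟩ := ti_surj _ hx
      have hqmem : Quotient.mk S x ∈ {q | tp q = ti i} := hi.symm
      rw [en_range i] at hqmem
      obtain ⟨j, hj⟩ := hqmem
      have hx' : x ∈ cpt (en i j) := by
        show Quotient.mk S x = en i j
        exact hj.symm
      obtain ⟨ℓ', hℓ'⟩ := e_surjOn _ _ hx'
      refine Or.inr ⟨i, j, ⟨(ℓ' : ℕ), lt_of_lt_of_eq ℓ'.isLt (sz_en i j)⟩, ?_⟩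
      show e (en i j) ⟨(ℓ' : ℕ), _⟩ = x
      exact hℓ'
  have core : ∀ (i : Fin n) (j j' : ℕ) (g : M → M), (∀ ℓ, g (c i j ℓ) = c i j' ℓ) →
      ∀ (r : L) (v : Fin (arity r) → M), v ∈ rel r →
      ∀ (p₀ : Fin (arity r)) (ℓ₀ : Fin (k i)), v p₀ = c i j ℓ₀ →
      (fun p => g (v p)) ∈ rel r := by
    intro i j j' g hg r v hv p₀ ℓ₀ hp
    obtain ⟨w, hw⟩ := decomp r v hv (en i j) p₀ (by rw [hp]; exact c_class i j ℓ₀)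
    have hvp : ∀ p, v p = c i j ⟨(w p : ℕ), lt_of_lt_of_eq (w p).isLt (sz_en i j)⟩ := by
      intro p
      rw [← hw p]
    have hgoal : (fun p => g (v p)) = fun p => e (en i j')
        ⟨(w p : ℕ), lt_of_lt_of_eq (lt_of_lt_of_eq (w p).isLt (sz_en i j)) (sz_en i j').symm⟩ := by
      funext p
      rw [hvp p, hg]
    rw [hgoal]
    refine transfer (en i j) (en i j') (by rw [tp_en i j, tp_en i j']) r w _ (fun _ => rfl) ?_
    have hveq : (fun p => e (en i j) (w p)) = v := funext hw
    rw [hveq]; exact hv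
  have fwd : ∀ (i : Fin n) (j j' : ℕ) (g : M → M),
      (∀ ℓ, g (c i j ℓ) = c i j' ℓ) → (∀ x, (∀ ℓ, x ≠ c i j ℓ) → g x = x) →
      ∀ (r : L) (v : Fin (arity r) → M), v ∈ rel r → (fun p => g (v p)) ∈ rel r := by
    intro i j j' g hg hfix r v hv
    by_cases hcase : ∃ p ℓ, v p = c i j ℓ
    · obtain ⟨p₀, ℓ₀, hp⟩ := hcase
      exact core i j j' g hg r v hv p₀ ℓ₀ hp
    · push_neg at hcase
      have hid : (fun p => g (v p)) = v := funext fun p => hfix (v p) (hcase p)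
      rw [hid]; exact hv
  have Kfin : K.Finite := by
    have hsub : K ⊆ ⋃ t : Fin (B + 1) × ((r : L) → Set (Fin (arity r) → Fin B)),
        {x | tp (Quotient.mk S x) = t ∧ {q | tp q = t}.Finite} := by
      intro x hx
      exact Set.mem_iUnion.mpr ⟨tp (Quotient.mk S x), rfl, hx⟩
    refine Set.Finite.subset (Set.finite_iUnion ?_) hsub
    intro t
    by_cases ht : {q | tp q = t}.Finite
    · have hsub2 : {x | tp (Quotient.mk S x) = t ∧ {q | tp q = t}.Finite} ⊆
          ⋃ q ∈ {q | tp q = t}, cpt q := by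
        rintro x ⟨hx1, _⟩
        exact Set.mem_biUnion hx1 (cpt_self x)
      refine Set.Finite.subset (Set.Finite.biUnion ht ?_) hsub2
      intro q _
      rw [← erange q]
      exact Set.finite_range _
    · have hempty : {x | tp (Quotient.mk S x) = t ∧ {q | tp q = t}.Finite} = ∅ := by
        ext x
        simp only [Set.mem_setOf_eq, Set.mem_empty_iff_false, iff_false, not_and]
        exact fun _ h2 => ht h2
      rw [hempty]
      exact Set.finite_empty
  refine ⟨K, n, k, c, Kfin, cover, c_notK, c_inj, ?_, ?_⟩
  · intro i j j'
    set g : M → M := fun x => if h : ∃ ℓ, x = c i j ℓ then c i j' h.choose else x with hg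
    have g_map : ∀ ℓ, g (c i j ℓ) = c i j' ℓ := by
      intro ℓ
      have h : ∃ ℓ', c i j ℓ = c i j ℓ' := ⟨ℓ, rfl⟩
      show (if h : ∃ ℓ', c i j ℓ = c i j ℓ' then c i j' h.choose else c i j ℓ) = c i j' ℓ
      rw [dif_pos h]
      have hch : h.choose = ℓ := Fin.ext ((c_inj i j ℓ i j h.choose h.choose_spec).2.2).symm
      rw [hch]
    have g_fix : ∀ x, (∀ ℓ, x ≠ c i j ℓ) → g x = x := by
      intro x hx
      show (if h : ∃ ℓ, x = c i j ℓ then c i j' h.choose else x) = x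
      exact dif_neg (by push_neg; exact hx)
    set g' : M → M := fun x => if h : ∃ ℓ, x = c i j' ℓ then c i j h.choose else x with hg'
    have g'_map : ∀ ℓ, g' (c i j' ℓ) = c i j ℓ := by
      intro ℓ
      have h : ∃ ℓ', c i j' ℓ = c i j' ℓ' := ⟨ℓ, rfl⟩
      show (if h : ∃ ℓ', c i j' ℓ = c i j' ℓ' then c i j h.choose else c i j' ℓ) = c i j ℓ
      rw [dif_pos h]
      have hch : h.choose = ℓ := Fin.ext ((c_inj i j' ℓ i j' h.choose h.choose_spec).2.2).symm
      rw [hch]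
    have g'_fix : ∀ x, (∀ ℓ, x ≠ c i j' ℓ) → g' x = x := by
      intro x hx
      show (if h : ∃ ℓ, x = c i j' ℓ then c i j h.choose else x) = x
      exact dif_neg (by push_neg; exact hx)
    refine ⟨g, ?_, g_map, ?_⟩
    · intro x hxK
      exact g_fix x fun ℓ h => c_notK i j ℓ (h ▸ hxK)
    · intro r v hv
      constructor
      · intro hr
        exact fwd i j j' g g_map g_fix r v hr
      · intro hr
        have h2 := fwd i j' j g' g'_map g'_fix r (fun p => g (v p)) hr
        have h3 : (fun p => g' (g (v p))) = v := by
          funext p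
          rcases hv p with hKp | ⟨ℓ, hℓ⟩
          · rw [g_fix _ (fun ℓ h => c_notK i j ℓ (h ▸ hKp)),
              g'_fix _ (fun ℓ h => c_notK i j' ℓ (h ▸ hKp))]
          · rw [hℓ, g_map, g'_map]
        rw [← h3]
        exact h2
  · intro i σ
    set F : Equiv.Perm ℕ → M → M := fun τ x =>
      if h : ∃ j ℓ, x = c i j ℓ then c i (τ h.choose) h.choose_spec.choose else x with hF
    have F_map : ∀ (τ : Equiv.Perm ℕ) j ℓ, F τ (c i j ℓ) = c i (τ j) ℓ := by
      intro τ j ℓ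
      have h : ∃ j' ℓ', c i j ℓ = c i j' ℓ' := ⟨j, ℓ, rfl⟩
      show (if h : ∃ j' ℓ', c i j ℓ = c i j' ℓ' then c i (τ h.choose) h.choose_spec.choose
        else c i j ℓ) = c i (τ j) ℓ
      rw [dif_pos h]
      have hspec := h.choose_spec.choose_spec
      set j1 := h.choose with hj1
      set l1 := h.choose_spec.choose with hl1
      obtain ⟨-, h2, h3⟩ := c_inj i j ℓ i j1 l1 hspec
      have hl : l1 = ℓ := Fin.ext h3.symm
      rw [hl]
      rw [hj1] at h2
      rw [← h2]
    have F_fix : ∀ (τ : Equiv.Perm ℕ) x, (∀ j ℓ, x ≠ c i j ℓ) → F τ x = x := by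
      intro τ x hx
      show (if h : ∃ j ℓ, x = c i j ℓ then c i (τ h.choose) h.choose_spec.choose else x) = x
      exact dif_neg (by push_neg; exact hx)
    have F_inv : ∀ (τ : Equiv.Perm ℕ) x, F τ⁻¹ (F τ x) = x := by
      intro τ x
      by_cases h : ∃ j ℓ, x = c i j ℓ
      · obtain ⟨j, ℓ, rfl⟩ := h
        rw [F_map, F_map, Equiv.Perm.inv_def, Equiv.symm_apply_apply]
      · push_neg at h
        rw [F_fix τ x h, F_fix τ⁻¹ x h]
    have Fsurj : Function.RightInverse (F σ⁻¹) (F σ) := by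
      intro x
      have h := F_inv σ⁻¹ x
      rwa [inv_inv] at h
    refine ⟨F σ, ⟨Function.LeftInverse.injective (F_inv σ), Fsurj.surjective⟩, ?_,
      fun j ℓ => F_map σ j ℓ, fun x hx => F_fix σ x hx⟩
    intro r v
    have fwd6 : ∀ (τ : Equiv.Perm ℕ) (v' : Fin (arity r) → M), v' ∈ rel r →
        (fun p => F τ (v' p)) ∈ rel r := by
      intro τ v' hv'
      by_cases hcase : ∃ p j ℓ, v' p = c i j ℓ
      · obtain ⟨p₀, j₀, ℓ₀, hp⟩ := hcase
        exact core i j₀ (τ j₀) (F τ) (fun ℓ => F_map τ j₀ ℓ) r v' hv' p₀ ℓ₀ hp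
      · push_neg at hcase
        have hid : (fun p => F τ (v' p)) = v' := funext fun p => F_fix τ (v' p) (hcase p)
        rw [hid]; exact hv'
    constructor
    · exact fun hv => fwd6 σ v hv
    · intro hv
      have h2 := fwd6 σ⁻¹ _ hv
      have h3 : (fun p => F σ⁻¹ ((F σ ∘ v) p)) = v := funext fun p => F_inv σ (v p)
      rw [← h3]
      exact h2
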